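/- Let Γ be a countable discrete group, (X,μ) a standard probability space, K the Cantor set, and a_n, a measure-preserving actions of Γ on (X,μ). If for every finite set L the closures of E(a_n,L) converge to the closure of E(a,L) in the hyperspace of compact subsets of M_s(L^Γ) (with the Hausdorff metric), then the closures of E(a_n,K) converge to the closure of E(a,K) in the hyperspace of compact subsets of M_s(K^Γ). -/

import Mathlib

open MeasureTheory Filter Topology Set

/-- A measure-preserving action of a group `Γ` on a measure space `(X, μ)`. -/
structure MPAction (Γ : Type*) [Group Γ] (X : Type*) [MeasurableSpace X]
    (μ : MeasureTheory.Measure X) where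
  act : Γ → X → X
  measurePreserving_act : ∀ γ : Γ, MeasureTheory.MeasurePreserving (act γ) μ μ
  act_one : ∀ x, act 1 x = x
  act_mul : ∀ γ δ x, act (γ * δ) x = act γ (act δ x)

namespace MPAction

variable {Γ : Type*} [Group Γ] {X : Type*} [MeasurableSpace X] {μ : Measure X}
  {Y : Type*} [MeasurableSpace Y] {ν : Measure Y}
  {W : Type*} [MeasurableSpace W] {ρ : Measure W}

/-- Weak containment of measure-preserving actions. -/
def WeaklyContained (a : MPAction Γ X μ) (b : MPAction Γ Y ν) : Prop :=
  ∀ (n : ℕ) (A : Fin n → Set X), (∀ i, MeasurableSet (A i)) →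
    ∀ (F : Finset Γ) (ε : ℝ), 0 < ε →
      ∃ B : Fin n → Set Y, (∀ i, MeasurableSet (B i)) ∧
        ∀ γ ∈ F, ∀ i j : Fin n,
          |(μ (a.act γ '' A i ∩ A j)).toReal - (ν (b.act γ '' B i ∩ B j)).toReal| < ε

/-- Weak equivalence of measure-preserving actions. -/
def WeakEquiv (a : MPAction Γ X μ) (b : MPAction Γ Y ν) : Prop :=
  WeaklyContained a b ∧ WeaklyContained b a

/-- A finite measurable partition of the space. -/
def IsPartition {k : ℕ} (A : Fin k → Set X) : Prop :=
  (∀ i, MeasurableSet (A i)) ∧ Pairwise (Function.onFun Disjoint A) ∧ (⋃ i, A i) = Set.univ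

/-- The compact set `C_{n,k}(a) ⊆ [0,1]^{n × k × k}`: the closure of the collection of
matrices of measures `μ(γ_p^a A_q ∩ A_r)` over all measurable `k`-partitions, with respect
to the fixed enumeration `e` of the group. -/
noncomputable def Cnk (e : ℕ → Γ) (a : MPAction Γ X μ) (n k : ℕ) :
    Set ((Fin n × Fin k × Fin k) → ℝ) :=
  closure { v | ∃ A : Fin k → Set X, IsPartition A ∧
    ∀ (p : Fin n) (q r : Fin k), v (p, q, r) = (μ (a.act (e p.1) '' A q ∩ A r)).toReal }

/-- The metric `d` on weak equivalence classes:
`d(a,b) = Σ_{n,k} 2^{-(n+k)} d_H(C_{n,k}(a), C_{n,k}(b))`. -/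
noncomputable def dWE (e : ℕ → Γ) (a : MPAction Γ X μ) (b : MPAction Γ Y ν) : ℝ :=
  ∑' nk : ℕ × ℕ, (2 : ℝ) ^ (-(nk.1 : ℤ) - (nk.2 : ℤ)) *
    Metric.hausdorffDist (Cnk e a nk.1 nk.2) (Cnk e b nk.1 nk.2)

section Mix

variable {ι : Type*} {Z : ι → Type*} [∀ i, MeasurableSpace (Z i)]

theorem measurable_sigmaMk' (i : ι) : Measurable (@Sigma.mk ι Z i) :=
  measurable_iff_le_map.2 (iInf_le _ i)

theorem measurable_of_sigma {δ : Type*} [MeasurableSpace δ] {f : Sigma Z → δ}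
    (hf : ∀ i, Measurable (f ∘ Sigma.mk i)) : Measurable f := by
  intro s hs
  rw [Sigma.instMeasurableSpace, MeasurableSpace.measurableSet_iInf]
  intro i
  exact hf i hs

/-- The measure `Σ_i λ_i ν_i` on the disjoint union `⊔_i Z_i`. -/
noncomputable def mixMeasure (lam : ι → ℝ) (νs : ∀ i, Measure (Z i)) :
    Measure ((i : ι) × Z i) :=
  Measure.sum fun i => ENNReal.ofReal (lam i) • (νs i).map (Sigma.mk i)

instance mixMeasure.instSFinite [Countable ι] (lam : ι → ℝ) (νs : ∀ i, Measure (Z i))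
    [∀ i, SFinite (νs i)] : SFinite (mixMeasure lam νs) := by
  unfold mixMeasure
  infer_instance

/-- The convex combination `Σ_i λ_i a_i` of measure-preserving actions, acting on the
disjoint union `⊔_i Z_i` with the measure `Σ_i λ_i ν_i`. -/
noncomputable def mix [Countable ι] {νs : ∀ i, Measure (Z i)} (lam : ι → ℝ)
    (a : ∀ i, MPAction Γ (Z i) (νs i)) : MPAction Γ ((i : ι) × Z i) (mixMeasure lam νs) where
  act γ p := ⟨p.1, (a p.1).act γ p.2⟩
  measurePreserving_act γ := by
    have hmeas : Measurable fun p : (i : ι) × Z i => (⟨p.1, (a p.1).act γ p.2⟩ : (i : ι) × Z i) := by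
      apply measurable_of_sigma
      intro i
      exact (measurable_sigmaMk' i).comp ((a i).measurePreserving_act γ).measurable
    refine ⟨hmeas, ?_⟩
    refine Measure.ext fun s hs => ?_
    rw [Measure.map_apply hmeas hs]
    rw [mixMeasure, Measure.sum_apply _ (hmeas hs), Measure.sum_apply _ hs]
    congr 1
    funext i
    rw [Measure.smul_apply, Measure.smul_apply,
      Measure.map_apply (measurable_sigmaMk' i) (hmeas hs),
      Measure.map_apply (measurable_sigmaMk' i) hs]
    congr 1
    have hpre : (Sigma.mk i) ⁻¹'
        ((fun p : (i : ι) × Z i => (⟨p.1, (a p.1).act γ p.2⟩ : (i : ι) × Z i)) ⁻¹' s)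
        = ((a i).act γ) ⁻¹' (Sigma.mk i ⁻¹' s) := rfl
    rw [hpre]
    exact ((a i).measurePreserving_act γ).measure_preimage
      ((measurable_sigmaMk' i) hs).nullMeasurableSet
  act_one p := by
    cases p with
    | mk i x => simp only [(a i).act_one]
  act_mul γ δ p := by
    cases p with
    | mk i x => simp only [(a i).act_mul]

end Mix

/-- The binary convex combination `t a + (1 - t) b` of two actions on `(X, μ)`,
realized on the disjoint union of two copies of `X` carrying measures `tμ` and `(1-t)μ`. -/
noncomputable def convComb (t : ℝ) (a b : MPAction Γ X μ) :
    MPAction Γ ((_ : Fin 2) × X) (mixMeasure ![t, 1 - t] fun _ => μ) :=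
  mix (νs := fun _ => μ) ![t, 1 - t] ![a, b]

/-- The trivial action. -/
def trivAction (Γ : Type*) [Group Γ] (Y : Type*) [MeasurableSpace Y] (ν : Measure Y) :
    MPAction Γ Y ν where
  act _ y := y
  measurePreserving_act _ := MeasurePreserving.id ν
  act_one _ := rfl
  act_mul _ _ _ := rfl

/-- The product of two measure-preserving actions. -/
noncomputable def prodAction [SFinite μ] [SFinite ν] (a : MPAction Γ X μ) (b : MPAction Γ Y ν) :
    MPAction Γ (X × Y) (μ.prod ν) where
  act γ := Prod.map (a.act γ) (b.act γ)
  measurePreserving_act γ := (a.measurePreserving_act γ).prod (b.measurePreserving_act γ)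
  act_one p := by simp [Prod.map, a.act_one, b.act_one]
  act_mul γ δ p := by simp [Prod.map, a.act_mul, b.act_mul]

/-- Stable weak containment: `a ≺_s b` iff `a ≺ ι × b`, where `ι` is the trivial action of `Γ`
on the standard probability space `(X₀, μ₀)`. -/
def StableWeaklyContained {X₀ : Type*} [MeasurableSpace X₀] (μ₀ : Measure X₀) [SFinite μ₀]
    (a : MPAction Γ W ρ) (b : MPAction Γ Y ν) [SFinite ν] : Prop :=
  WeaklyContained a (prodAction (trivAction Γ X₀ μ₀) b)

/-- Stable weak equivalence. -/
def StableWeakEquiv {X₀ : Type*} [MeasurableSpace X₀] (μ₀ : Measure X₀) [SFinite μ₀]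
    (a : MPAction Γ W ρ) [SFinite ρ] (b : MPAction Γ Y ν) [SFinite ν] : Prop :=
  StableWeaklyContained μ₀ a b ∧ StableWeaklyContained μ₀ b a

/-- An action is ergodic if every strictly invariant measurable set is null or conull. -/
def IsErgodicAction (a : MPAction Γ X μ) : Prop :=
  ∀ A : Set X, MeasurableSet A → (∀ γ, a.act γ ⁻¹' A = A) → μ A = 0 ∨ μ Aᶜ = 0

/-- An action is (essentially) free if almost every point has trivial stabilizer. -/
def IsFreeAction (a : MPAction Γ X μ) : Prop :=
  ∀ᵐ x ∂μ, ∀ γ : Γ, γ ≠ 1 → a.act γ x ≠ x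

end MPAction

section Cylinders

/-- The Cantor set. -/
abbrev Cantor : Type := ℕ → Bool

/-- Basic clopen subsets of the Cantor set: sets determined by finitely many coordinates. -/
def cantorBasic : Set (Set Cantor) :=
  { B | ∃ (s : Finset ℕ) (σ : ℕ → Bool), B = {x : Cantor | ∀ n ∈ s, x n = σ n} }

/-- The clopen cylinder subsets of `K^Γ` of the form `π_F⁻¹(Π_{γ ∈ F} A_γ)` with `F ⊆ Γ`
finite and each `A_γ` a basic clopen subset of the Cantor set `K`. -/
def KCyl (Γ : Type*) : Set (Set (Γ → Cantor)) :=
  { C | ∃ (F : Finset Γ) (B : Γ → Set Cantor),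
      (∀ γ ∈ F, B γ ∈ cantorBasic) ∧ C = {f | ∀ γ ∈ F, f γ ∈ B γ} }

/-- The basic clopen cylinder subsets of `L^Γ` for a finite set `L`:
sets of the form `∩_{γ ∈ F} π_γ⁻¹({j_γ})`. -/
def LCyl (Γ : Type*) (L : Type*) : Set (Set (Γ → L)) :=
  { C | ∃ (F : Finset Γ) (j : Γ → L), C = {f | ∀ γ ∈ F, f γ = j γ} }

/-- `A` enumerates the collection of sets `S`. -/
def Enumerates {M : Type*} (A : ℕ → Set M) (S : Set (Set M)) : Prop :=
  (∀ i, A i ∈ S) ∧ ∀ C ∈ S, ∃ i, A i = C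

/-- The compatible metric `δ(ν,ρ) = Σ_i 2^{-(i+1)} |ν(A_i) - ρ(A_i)|` on the space of
probability measures, determined by an enumeration `A` of a generating family of sets. -/
noncomputable def deltaEnum {M : Type*} [MeasurableSpace M] (A : ℕ → Set M)
    (m m' : MeasureTheory.Measure M) : ℝ :=
  ∑' i : ℕ, (2 : ℝ) ^ (-(i : ℤ) - 1) * |(m (A i)).toReal - (m' (A i)).toReal|

/-- Convergence of a sequence of sets of measures to a set of measures in the Hausdorff
(metric) sense, with respect to a metric `δ`: for every `ε > 0`, eventually each of the two
sets is contained in the `ε`-neighbourhood of the other.  (Equivalently, the closures converge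
in the Hausdorff metric topology on the hyperspace of compact subsets.) -/
def HausTendsto {M : Type*} [MeasurableSpace M]
    (δ : MeasureTheory.Measure M → MeasureTheory.Measure M → ℝ)
    (En : ℕ → Set (MeasureTheory.Measure M)) (E : Set (MeasureTheory.Measure M)) : Prop :=
  ∀ ε : ℝ, 0 < ε → ∃ N : ℕ, ∀ n ≥ N,
    (∀ m ∈ En n, ∃ m' ∈ E, δ m m' < ε) ∧ (∀ m' ∈ E, ∃ m ∈ En n, δ m m' < ε)

variable {Γ : Type*} [Group Γ] {X : Type*} [MeasurableSpace X] {μ : MeasureTheory.Measure X}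

/-- The map `Φ^{φ,a} : X → S^Γ`, `Φ^{φ,a}(x)(γ) = φ((γ⁻¹)^a x)`, associated to an observable
`φ : X → S` and an action `a`. -/
def MPAction.phiMap (a : MPAction Γ X μ) {S : Type*} (φ : X → S) : X → (Γ → S) :=
  fun x γ => φ (a.act γ⁻¹ x)

/-- The set `E(a,S) = {(Φ^{φ,a})_* μ : φ : X → S measurable}` of shift-invariant measures
on `S^Γ` associated to the action `a`. -/
noncomputable def MPAction.ESet (a : MPAction Γ X μ) (S : Type*) [MeasurableSpace S] :
    Set (MeasureTheory.Measure (Γ → S)) :=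
  { m | ∃ φ : X → S, Measurable φ ∧ m = μ.map (a.phiMap φ) }

end Cylinders

section Aux

lemma two_zpow_eq (i : ℕ) : (2:ℝ)^(-(i:ℤ)-1) = (1/2:ℝ)^(i+1) := by
  rw [one_div, inv_pow, ← zpow_natCast (2:ℝ) (i+1), ← zpow_neg]
  congr 1
  push_cast
  ring

lemma two_zpow_neg (N : ℕ) : (2:ℝ)^(-(N:ℤ)) = (1/2:ℝ)^N := by
  rw [one_div, inv_pow, ← zpow_natCast (2:ℝ) N, ← zpow_neg]

variable {M : Type*} [MeasurableSpace M] (A : ℕ → Set M) (m m' : Measure M)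

lemma toReal_prob_le_one [IsProbabilityMeasure m] (S : Set M) : (m S).toReal ≤ 1 := by
  simpa using ENNReal.toReal_mono ENNReal.one_ne_top (prob_le_one (μ := m) (s := S))

lemma deltaTerm_nonneg (i : ℕ) :
    0 ≤ (2:ℝ)^(-(i:ℤ)-1) * |(m (A i)).toReal - (m' (A i)).toReal| :=
  mul_nonneg (by positivity) (abs_nonneg _)

lemma deltaTerm_le [IsProbabilityMeasure m] [IsProbabilityMeasure m'] (i : ℕ) :
    (2:ℝ)^(-(i:ℤ)-1) * |(m (A i)).toReal - (m' (A i)).toReal| ≤ (2:ℝ)^(-(i:ℤ)-1) := by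
  have hx := toReal_prob_le_one m (A i)
  have hy := toReal_prob_le_one m' (A i)
  have hx0 : (0:ℝ) ≤ (m (A i)).toReal := ENNReal.toReal_nonneg
  have hy0 : (0:ℝ) ≤ (m' (A i)).toReal := ENNReal.toReal_nonneg
  have hd : |(m (A i)).toReal - (m' (A i)).toReal| ≤ 1 :=
    abs_sub_le_iff.mpr ⟨by linarith, by linarith⟩
  calc (2:ℝ)^(-(i:ℤ)-1) * |(m (A i)).toReal - (m' (A i)).toReal|
      ≤ (2:ℝ)^(-(i:ℤ)-1) * 1 := by
        apply mul_le_mul_of_nonneg_left hd (by positivity)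
    _ = (2:ℝ)^(-(i:ℤ)-1) := mul_one _

lemma summable_half_shift (N : ℕ) : Summable (fun k : ℕ => (1/2:ℝ)^(k+N)) := by
  have : Summable (fun k : ℕ => (1/2:ℝ)^k) := summable_geometric_two
  simpa [pow_add] using this.mul_right ((1/2:ℝ)^N)

lemma deltaSummable [IsProbabilityMeasure m] [IsProbabilityMeasure m'] :
    Summable (fun i : ℕ => (2:ℝ)^(-(i:ℤ)-1) * |(m (A i)).toReal - (m' (A i)).toReal|) := by
  apply Summable.of_nonneg_of_le (deltaTerm_nonneg A m m') (deltaTerm_le A m m')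
  simp only [two_zpow_eq]
  simpa using summable_half_shift 1

lemma deltaEnum_nonneg : 0 ≤ deltaEnum A m m' :=
  tsum_nonneg (deltaTerm_nonneg A m m')

lemma tsum_half_shift (N : ℕ) : ∑' k : ℕ, (1/2:ℝ)^(k+N+1) = (2:ℝ)^(-(N:ℤ)) := by
  have h1 : ∀ k : ℕ, (1/2:ℝ)^(k+N+1) = (1/2)^k * (1/2)^(N+1) := by
    intro k; rw [show k+N+1 = k+(N+1) by ring, pow_add]
  rw [tsum_congr h1, tsum_mul_right, tsum_geometric_two, two_zpow_neg, pow_succ]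
  ring

lemma deltaEnum_le_sum [IsProbabilityMeasure m] [IsProbabilityMeasure m'] (N : ℕ) :
    deltaEnum A m m' ≤
      (∑ i ∈ Finset.range N, (2:ℝ)^(-(i:ℤ)-1) * |(m (A i)).toReal - (m' (A i)).toReal|)
        + (2:ℝ)^(-(N:ℤ)) := by
  have hsum := deltaSummable A m m'
  have htail : ∑' k : ℕ,
      (2:ℝ)^(-((k+N:ℕ):ℤ)-1) * |(m (A (k+N))).toReal - (m' (A (k+N))).toReal|
      ≤ (2:ℝ)^(-(N:ℤ)) := by
    refine le_trans (Summable.tsum_le_tsum (fun k => ?_) ((summable_nat_add_iff N).2 hsum)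
      (summable_half_shift (N+1))) (le_of_eq (tsum_half_shift N))
    calc (2:ℝ)^(-((k+N:ℕ):ℤ)-1) * |(m (A (k+N))).toReal - (m' (A (k+N))).toReal|
        ≤ (2:ℝ)^(-((k+N:ℕ):ℤ)-1) := deltaTerm_le A m m' (k+N)
      _ = (1/2:ℝ)^(k+N+1) := two_zpow_eq (k+N)
  rw [deltaEnum, ← Summable.sum_add_tsum_nat_add N hsum]
  exact add_le_add_right htail _

lemma abs_le_deltaEnum [IsProbabilityMeasure m] [IsProbabilityMeasure m'] (k : ℕ) :
    |(m (A k)).toReal - (m' (A k)).toReal| ≤ (2:ℝ)^(k+1) * deltaEnum A m m' := by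
  have hk : (2:ℝ)^(-(k:ℤ)-1) * |(m (A k)).toReal - (m' (A k)).toReal| ≤ deltaEnum A m m' :=
    Summable.le_tsum (deltaSummable A m m') k (fun (i : ℕ) _ => deltaTerm_nonneg A m m' i)
  have h2 : (2:ℝ)^(k+1) * (2:ℝ)^(-(k:ℤ)-1) = 1 := by
    rw [two_zpow_eq, one_div, inv_pow, mul_inv_cancel₀ (by positivity)]
  calc |(m (A k)).toReal - (m' (A k)).toReal|
      = (2:ℝ)^(k+1) * ((2:ℝ)^(-(k:ℤ)-1) * |(m (A k)).toReal - (m' (A k)).toReal|) := by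
        rw [← mul_assoc, h2, one_mul]
    _ ≤ (2:ℝ)^(k+1) * deltaEnum A m m' := by
        apply mul_le_mul_of_nonneg_left hk (by positivity)

lemma toReal_measure_eq_sum {Ω : Type*} [MeasurableSpace Ω] {J : Type*} [Fintype J]
    (ν : Measure Ω) [IsFiniteMeasure ν] (S : Set Ω) (cyl : J → Set Ω)
    (hS : MeasurableSet S) (hcyl : ∀ j, MeasurableSet (cyl j))
    (hcover : ⋃ j, cyl j = Set.univ) (hdisj : Pairwise (Function.onFun Disjoint cyl)) :
    (ν S).toReal = ∑ j, (ν (S ∩ cyl j)).toReal := by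
  have hU : S = ⋃ j, S ∩ cyl j := by rw [← Set.inter_iUnion, hcover, Set.inter_univ]
  have h2 : ν S = ∑' j, ν (S ∩ cyl j) := by
    conv_lhs => rw [hU]
    exact measure_iUnion
      (fun j k hjk => (hdisj hjk).mono Set.inter_subset_right Set.inter_subset_right)
      (fun j => hS.inter (hcyl j))
  rw [h2, tsum_fintype, ENNReal.toReal_sum (fun j _ => measure_ne_top ν _)]

end Aux


lemma MPAction.measurable_phiMap {Γ X : Type*} [Group Γ] [MeasurableSpace X]
    {μ : Measure X} (a : MPAction Γ X μ) {S : Type*} [MeasurableSpace S] {φ : X → S}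
    (hφ : Measurable φ) : Measurable (a.phiMap φ) :=
  measurable_pi_lambda _ fun γ => hφ.comp (a.measurePreserving_act γ⁻¹).measurable

/-- If for every finite set `L` (modelled as `Fin m`) the closures of
`E(a_n,L)` converge to the closure of `E(a,L)` in the hyperspace of compact subsets of
`M_s(L^Γ)` (with the Hausdorff metric built, as usual, from an enumeration of the cylinder
sets of `L^Γ`), then the closures of `E(a_n,K)` converge to the closure of `E(a,K)` in the
hyperspace of compact subsets of `M_s(K^Γ)`, where `K` is the Cantor set. -/
theorem ESet_cantor_hausdorff_tendsto_of_finite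
    (Γ : Type) [Group Γ] [Countable Γ]
    (X : Type) [MeasurableSpace X] [StandardBorelSpace X]
    (μ : Measure X) [IsProbabilityMeasure μ] [NullSingletonClass μ]
    (A : ℕ → Set (Γ → Cantor)) (hA : Enumerates A (KCyl Γ))
    (a : ℕ → MPAction Γ X μ) (b : MPAction Γ X μ)
    (h : ∀ (m : ℕ) (AL : ℕ → Set (Γ → Fin m)), Enumerates AL (LCyl Γ (Fin m)) →
      HausTendsto (deltaEnum AL) (fun n => (a n).ESet (Fin m)) (b.ESet (Fin m))) :
    HausTendsto (deltaEnum A) (fun n => (a n).ESet Cantor) (b.ESet Cantor) := by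
  
  classical
  obtain ⟨hA1, _hA2⟩ := hA
  choose F B hB hABeq using hA1
  choose sset sig hsig using fun i γ (hγ : γ ∈ F i) => hB i γ hγ
  intro ε hε
  obtain ⟨N, hN⟩ : ∃ N : ℕ, (2:ℝ)^(-(N:ℤ)) < ε/3 := by
    obtain ⟨N, hN⟩ := exists_pow_lt_of_lt_one (show (0:ℝ) < ε/3 by linarith)
      (show (1/2:ℝ) < 1 by norm_num)
    exact ⟨N, by rw [two_zpow_neg]; exact hN⟩
  set s : Finset ℕ :=
    (Finset.range N).biUnion (fun i => (F i).attach.biUnion (fun γ => sset i γ.1 γ.2)) with hs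
  have hsub : ∀ i, i < N → ∀ γ (hγ : γ ∈ F i), ∀ n ∈ sset i γ hγ, n ∈ s := by
    intro i hi γ hγ n hn
    rw [hs]
    exact Finset.mem_biUnion.2 ⟨i, Finset.mem_range.2 hi,
      Finset.mem_biUnion.2 ⟨⟨γ, hγ⟩, Finset.mem_attach _ _, hn⟩⟩
  set m := Fintype.card ((↥s) → Bool) with hm
  have hm0 : 0 < m := Fintype.card_pos
  set Em : ((↥s) → Bool) ≃ Fin m := Fintype.equivFin _ with hEm
  set π : Cantor → Fin m := fun x => Em (fun n => x n) with hπ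
  set ι : Fin m → Cantor := fun v n => if h : n ∈ s then Em.symm v ⟨n, h⟩ else false with hι
  have hπι : ∀ v, π (ι v) = v := by
    intro v
    rw [hπ]
    have hrestr : (fun n : ↥s => ι v (n:ℕ)) = Em.symm v := by
      funext n
      rw [hι]
      simp only
      rw [dif_pos n.2]
    simp only [hrestr, Equiv.apply_symm_apply]
  have hιπ : ∀ (x : Cantor) (n : ℕ), n ∈ s → ι (π x) n = x n := by
    intro x n hn
    rw [hι]
    simp only
    rw [dif_pos hn, hπ]
    simp only [Equiv.symm_apply_apply]
  have hπmeas : Measurable π := by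
    apply measurable_to_countable'
    intro v
    have hset : π ⁻¹' {v} = ⋂ n : ↥s, (fun x : Cantor => x (n:ℕ)) ⁻¹' {Em.symm v n} := by
      ext x
      simp only [Set.mem_preimage, Set.mem_singleton_iff, Set.mem_iInter, hπ]
      constructor
      · intro hx n
        have h2 := congrArg Em.symm hx
        rw [Equiv.symm_apply_apply] at h2
        exact congrFun h2 n
      · intro hx
        have h2 : (fun n : ↥s => x (n:ℕ)) = Em.symm v := funext hx
        rw [h2, Equiv.apply_symm_apply]
    rw [hset]
    exact MeasurableSet.iInter fun n =>
      (measurable_pi_apply (n:ℕ)) (MeasurableSet.singleton _)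
  have hιmeas : Measurable ι :=
    measurable_pi_lambda _ fun n => Measurable.of_discrete
  set Pm : (Γ → Cantor) → (Γ → Fin m) := fun f => π ∘ f with hPm
  have hPmmeas : Measurable Pm :=
    measurable_pi_lambda _ fun γ => hπmeas.comp (measurable_pi_apply γ)
  set Dset : ℕ → Set (Γ → Fin m) := fun i => {g | ∀ γ ∈ F i, ι (g γ) ∈ B i γ} with hDset
  have hDmeas : ∀ i, MeasurableSet (Dset i) := by
    intro i
    have hset : Dset i = ⋂ γ ∈ (F i : Set Γ), (fun g : Γ → Fin m => g γ) ⁻¹' (ι ⁻¹' (B i γ)) := by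
      ext g
      simp [hDset]
    rw [hset]
    exact MeasurableSet.biInter (F i).countable_toSet fun γ _ =>
      (measurable_pi_apply γ) MeasurableSet.of_discrete
  have hAD : ∀ i, i < N → A i = Pm ⁻¹' (Dset i) := by
    intro i hi
    rw [hABeq i]
    ext f
    simp only [Set.mem_setOf_eq, Set.mem_preimage, hDset, hPm, Function.comp_apply]
    refine forall_congr' fun γ => forall_congr' fun hγ => ?_
    rw [hsig i γ hγ]
    simp only [Set.mem_setOf_eq]
    refine forall_congr' fun n => forall_congr' fun hn => ?_
    rw [hιπ (f γ) n (hsub i hi γ hγ n hn)]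
  set cylF : (i : ℕ) → ((↥(F i)) → Fin m) → Set (Γ → Fin m) :=
    fun i j => {g | ∀ γ (hγ : γ ∈ F i), g γ = j ⟨γ, hγ⟩} with hcylF
  have hcylmeas : ∀ i (j : (↥(F i)) → Fin m), MeasurableSet (cylF i j) := by
    intro i j
    have hset : cylF i j = ⋂ γ : ↥(F i), (fun g : Γ → Fin m => g γ.1) ⁻¹' {j γ} := by
      ext g
      simp only [hcylF, Set.mem_setOf_eq, Set.mem_iInter, Set.mem_preimage,
        Set.mem_singleton_iff]
      exact ⟨fun H γ => H γ.1 γ.2, fun H γ hγ => H ⟨γ, hγ⟩⟩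
    rw [hset]
    exact MeasurableSet.iInter fun γ => (measurable_pi_apply _) MeasurableSet.of_discrete
  have hcylLCyl : ∀ i (j : (↥(F i)) → Fin m), cylF i j ∈ LCyl Γ (Fin m) := by
    intro i j
    refine ⟨F i, fun γ => if hγ : γ ∈ F i then j ⟨γ, hγ⟩ else ⟨0, hm0⟩, ?_⟩
    ext g
    simp only [hcylF, Set.mem_setOf_eq]
    constructor
    · intro H γ hγ
      rw [dif_pos hγ]
      exact H γ hγ
    · intro H γ hγ
      have h2 := H γ hγ
      rwa [dif_pos hγ] at h2
  have hcover : ∀ i, ⋃ j : (↥(F i)) → Fin m, cylF i j = Set.univ := by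
    intro i
    ext g
    simp only [Set.mem_iUnion, Set.mem_univ, iff_true, hcylF, Set.mem_setOf_eq]
    exact ⟨fun γ => g γ.1, fun γ hγ => rfl⟩
  have hdisj : ∀ i, Pairwise (Function.onFun Disjoint (cylF i)) := by
    intro i j k hjk
    rw [Function.onFun, Set.disjoint_left]
    intro g hg1 hg2
    apply hjk
    funext γ
    exact (hg1 γ.1 γ.2).symm.trans (hg2 γ.1 γ.2)
  have hinter : ∀ i (j : ↥(F i) → Fin m),
      Dset i ∩ cylF i j = if (∀ γ : ↥(F i), ι (j γ) ∈ B i γ.1) then cylF i j else ∅ := by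
    intro i j
    split_ifs with hj
    · apply Set.inter_eq_right.mpr
      intro g hg
      simp only [hcylF, Set.mem_setOf_eq] at hg
      simp only [hDset, Set.mem_setOf_eq]
      intro γ hγ
      rw [hg γ hγ]
      exact hj ⟨γ, hγ⟩
    · ext g
      simp only [Set.mem_inter_iff, Set.mem_empty_iff_false, iff_false, not_and,
        hDset, hcylF, Set.mem_setOf_eq]
      intro hg1 hg2
      apply hj
      intro γ
      have h2 := hg1 γ.1 γ.2
      rwa [hg2 γ.1 γ.2] at h2
  obtain ⟨AL, hALrange⟩ : ∃ AL : ℕ → Set (Γ → Fin m), LCyl Γ (Fin m) = Set.range AL := by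
    refine Set.Countable.exists_eq_range ?_ ?_
    · have hsubr : LCyl Γ (Fin m) ⊆ Set.range
          (fun p : Σ Fi : Finset Γ, (↥Fi → Fin m) =>
            {f : Γ → Fin m | ∀ γ (hγ : γ ∈ p.1), f γ = p.2 ⟨γ, hγ⟩}) := by
        rintro C ⟨Fi, j, rfl⟩
        refine ⟨⟨Fi, fun γ => j γ.1⟩, ?_⟩
        ext f
        simp only [Set.mem_setOf_eq]
      exact Set.Countable.mono hsubr (Set.countable_range _)
    · exact ⟨_, ⟨∅, fun _ => ⟨0, hm0⟩, rfl⟩⟩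
  have hALenum : Enumerates AL (LCyl Γ (Fin m)) := by
    constructor
    · intro i
      rw [hALrange]
      exact Set.mem_range_self i
    · intro C hC
      rw [hALrange] at hC
      obtain ⟨i, hi⟩ := hC
      exact ⟨i, hi⟩
  choose ki hki using fun i (j : ↥(F i) → Fin m) => hALenum.2 (cylF i j) (hcylLCyl i j)
  set Cc : ℝ := ∑ i ∈ Finset.range N, ∑ j : (↥(F i) → Fin m), (2:ℝ)^(ki i j + 1) with hCc
  have hCc0 : 0 ≤ Cc := by
    rw [hCc]
    apply Finset.sum_nonneg
    intro i _
    apply Finset.sum_nonneg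
    intro j _
    positivity
  set ε' : ℝ := ε / (3 * (Cc + 1)) with hε'
  have h3Cc : (0:ℝ) < 3 * (Cc + 1) := by linarith
  have hε'0 : 0 < ε' := by
    rw [hε']
    exact div_pos hε h3Cc
  obtain ⟨N₁, hN₁⟩ := h m AL hALenum ε' hε'0
  have key : ∀ ν₁ ν₂ : Measure (Γ → Cantor), IsProbabilityMeasure ν₁ → IsProbabilityMeasure ν₂ →
      deltaEnum AL (ν₁.map Pm) (ν₂.map Pm) < ε' → deltaEnum A ν₁ ν₂ < ε := by
    intro ν₁ ν₂ hp1 hp2 hδ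
    haveI := hp1
    haveI := hp2
    haveI i1 : IsProbabilityMeasure (ν₁.map Pm) := Measure.isProbabilityMeasure_map hPmmeas.aemeasurable
    haveI i2 : IsProbabilityMeasure (ν₂.map Pm) := Measure.isProbabilityMeasure_map hPmmeas.aemeasurable
    have hmain : ∀ i, i < N →
        |(ν₁ (A i)).toReal - (ν₂ (A i)).toReal| ≤
          (∑ j : (↥(F i) → Fin m), (2:ℝ)^(ki i j + 1)) *
            deltaEnum AL (ν₁.map Pm) (ν₂.map Pm) := by
      intro i hi
      have e1 : (ν₁ (A i)).toReal
          = ∑ j : (↥(F i) → Fin m), ((ν₁.map Pm) (Dset i ∩ cylF i j)).toReal := by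
        rw [hAD i hi, ← Measure.map_apply hPmmeas (hDmeas i)]
        exact toReal_measure_eq_sum _ _ _ (hDmeas i) (hcylmeas i) (hcover i) (hdisj i)
      have e2 : (ν₂ (A i)).toReal
          = ∑ j : (↥(F i) → Fin m), ((ν₂.map Pm) (Dset i ∩ cylF i j)).toReal := by
        rw [hAD i hi, ← Measure.map_apply hPmmeas (hDmeas i)]
        exact toReal_measure_eq_sum _ _ _ (hDmeas i) (hcylmeas i) (hcover i) (hdisj i)
      rw [e1, e2, ← Finset.sum_sub_distrib]
      refine le_trans (Finset.abs_sum_le_sum_abs _ _) ?_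
      rw [Finset.sum_mul]
      apply Finset.sum_le_sum
      intro j _
      by_cases hj : ∀ γ : ↥(F i), ι (j γ) ∈ B i γ.1
      · have h2 := hinter i j
        rw [if_pos hj] at h2
        rw [h2, ← hki i j]
        exact abs_le_deltaEnum AL _ _ (ki i j)
      · have h2 := hinter i j
        rw [if_neg hj] at h2
        rw [h2]
        simp only [measure_empty, ENNReal.toReal_zero, sub_zero, abs_zero, sub_self]
        exact mul_nonneg (by positivity) (deltaEnum_nonneg AL (ν₁.map Pm) (ν₂.map Pm))
    have hfinal := deltaEnum_le_sum A ν₁ ν₂ N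
    have hstep : ∑ i ∈ Finset.range N,
        (2:ℝ)^(-(i:ℤ)-1) * |(ν₁ (A i)).toReal - (ν₂ (A i)).toReal|
        ≤ Cc * deltaEnum AL (ν₁.map Pm) (ν₂.map Pm) := by
      rw [hCc, Finset.sum_mul]
      apply Finset.sum_le_sum
      intro i hi
      have hw1 : (2:ℝ)^(-(i:ℤ)-1) ≤ 1 := by
        rw [two_zpow_eq]
        exact pow_le_one₀ (by norm_num) (by norm_num)
      calc (2:ℝ)^(-(i:ℤ)-1) * |(ν₁ (A i)).toReal - (ν₂ (A i)).toReal|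
          ≤ |(ν₁ (A i)).toReal - (ν₂ (A i)).toReal| :=
            mul_le_of_le_one_left (abs_nonneg _) hw1
        _ ≤ _ := hmain i (Finset.mem_range.1 hi)
    have hCcε : Cc * deltaEnum AL (ν₁.map Pm) (ν₂.map Pm) ≤ ε/3 := by
      have hc1 : Cc * deltaEnum AL (ν₁.map Pm) (ν₂.map Pm) ≤ Cc * ε' :=
        mul_le_mul_of_nonneg_left hδ.le hCc0
      have hc2 : Cc * ε' ≤ ε/3 := by
        rw [hε', mul_div_assoc']
        rw [div_le_div_iff₀ h3Cc (by norm_num : (0:ℝ) < 3)]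
        nlinarith [hε.le, hCc0]
      linarith
    linarith
  refine ⟨N₁, fun n hn => ⟨?_, ?_⟩⟩
  · rintro m₁ ⟨φ, hφ, rfl⟩
    have hφm : Measurable ((a n).phiMap φ) := (a n).measurable_phiMap hφ
    have hproj : (μ.map ((a n).phiMap φ)).map Pm = μ.map ((a n).phiMap (π ∘ φ)) := by
      rw [Measure.map_map hPmmeas hφm]
      rfl
    obtain ⟨m₂', hm₂', hδ⟩ := (hN₁ n hn).1 (μ.map ((a n).phiMap (π ∘ φ)))
      ⟨π ∘ φ, hπmeas.comp hφ, rfl⟩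
    obtain ⟨ψ, hψ, rfl⟩ := hm₂'
    have hψm : Measurable (b.phiMap (ι ∘ ψ)) := b.measurable_phiMap (hιmeas.comp hψ)
    refine ⟨μ.map (b.phiMap (ι ∘ ψ)), ⟨ι ∘ ψ, hιmeas.comp hψ, rfl⟩, ?_⟩
    have hlift : (μ.map (b.phiMap (ι ∘ ψ))).map Pm = μ.map (b.phiMap ψ) := by
      rw [Measure.map_map hPmmeas hψm]
      congr 1
      funext x γ
      exact hπι _
    exact key _ _ (Measure.isProbabilityMeasure_map hφm.aemeasurable)
      (Measure.isProbabilityMeasure_map hψm.aemeasurable)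
      (by rw [hproj, hlift]; exact hδ)
  · rintro m₂ ⟨φ, hφ, rfl⟩
    have hφm : Measurable (b.phiMap φ) := b.measurable_phiMap hφ
    have hproj : (μ.map (b.phiMap φ)).map Pm = μ.map (b.phiMap (π ∘ φ)) := by
      rw [Measure.map_map hPmmeas hφm]
      rfl
    obtain ⟨m₁', hm₁', hδ⟩ := (hN₁ n hn).2 (μ.map (b.phiMap (π ∘ φ)))
      ⟨π ∘ φ, hπmeas.comp hφ, rfl⟩
    obtain ⟨ψ, hψ, rfl⟩ := hm₁'
    have hψm : Measurable ((a n).phiMap (ι ∘ ψ)) := (a n).measurable_phiMap (hιmeas.comp hψ)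
    refine ⟨μ.map ((a n).phiMap (ι ∘ ψ)), ⟨ι ∘ ψ, hιmeas.comp hψ, rfl⟩, ?_⟩
    have hlift : (μ.map ((a n).phiMap (ι ∘ ψ))).map Pm = μ.map ((a n).phiMap ψ) := by
      rw [Measure.map_map hPmmeas hψm]
      congr 1
      funext x γ
      exact hπι _
    exact key _ _ (Measure.isProbabilityMeasure_map hψm.aemeasurable)
      (Measure.isProbabilityMeasure_map hφm.aemeasurable)
      (by rw [hproj, hlift]; exact hδ)
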